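/- Let V be a real-analytic function on a neighborhood of 0 with power series V(r) = Σ Vₙrⁿ/n!, satisfying the ODE 3r⁴VV⁽⁵⁾ + 6r⁴V'V⁽⁴⁾ + 30r³VV⁽⁴⁾ + 44r³V'V⁽³⁾ + r²(47V − 32)V⁽³⁾ + 8r³(V'')² − 3r(13V + 32)V'' + 26r²V'V'' − 34r(V')² + 3V'(13V + 32) = 0 near 0. Then V₁ = 0, and moreover V₃·(V₀ − 32/11) = 0 and V₄·(V₀ − 1) = 0. -/

import Mathlib

set_option linter.unusedSectionVars false

open Filter Topology Set

section helpers
variable {s : Set ℝ} {x : ℝ} {f g h : ℝ → ℝ}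

lemma itdW (ho : IsOpen s) (hx : x ∈ s) (n : ℕ) (f : ℝ → ℝ) :
    iteratedDerivWithin n f s x = iteratedDeriv n f x := by
  rw [iteratedDerivWithin_eq_iteratedFDerivWithin, iteratedDeriv_eq_iteratedFDeriv,
    iteratedFDerivWithin_of_isOpen n ho hx]

lemma itd_add (ho : IsOpen s) (hx : x ∈ s) (hf : AnalyticOnNhd ℝ f s)
    (hg : AnalyticOnNhd ℝ g s) (n : ℕ) :
    iteratedDeriv n (fun y => f y + g y) x = iteratedDeriv n f x + iteratedDeriv n g x := by
  rw [← itdW ho hx n (fun y => f y + g y), ← itdW ho hx n f, ← itdW ho hx n g]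
  exact iteratedDerivWithin_add hx ho.uniqueDiffOn ((hf.contDiffOn ho.uniqueDiffOn).contDiffWithinAt hx)
    ((hg.contDiffOn ho.uniqueDiffOn).contDiffWithinAt hx)

lemma itd_cmul (ho : IsOpen s) (hx : x ∈ s) (hf : AnalyticOnNhd ℝ f s) (c : ℝ) (n : ℕ) :
    iteratedDeriv n (fun y => c * f y) x = c * iteratedDeriv n f x := by
  rw [← itdW ho hx n (fun y => c * f y), ← itdW ho hx n f]
  exact iteratedDerivWithin_const_mul hx ho.uniqueDiffOn c ((hf.contDiffOn ho.uniqueDiffOn).contDiffWithinAt hx)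

lemma itd_affine (ho : IsOpen s) (hx : x ∈ s) (hf : AnalyticOnNhd ℝ f s) (a b : ℝ) {n : ℕ}
    (hn : 0 < n) :
    iteratedDeriv n (fun y => a * f y + b) x = a * iteratedDeriv n f x := by
  have e : (fun y => a * f y + b) = fun y => b + a * f y := by funext y; ring
  rw [e, ← itdW ho hx n (fun y => b + a * f y),
    iteratedDerivWithin_const_add hn b,
    iteratedDerivWithin_const_mul hx ho.uniqueDiffOn a ((hf.contDiffOn ho.uniqueDiffOn).contDiffWithinAt hx),
    itdW ho hx n f]

lemma aff_deriv (hf : AnalyticOnNhd ℝ f s) (hx : x ∈ s) (a b : ℝ) :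
    deriv (fun y => a * f y + b) x = a * deriv f x := by
  rw [deriv_add_const, deriv_const_mul a (hf x hx).differentiableAt]

lemma d1 (hf : AnalyticOnNhd ℝ f s) (hg : AnalyticOnNhd ℝ g s) (hx : x ∈ s) :
    deriv (fun y => f y * g y) x = deriv f x * g x + f x * deriv g x :=
  deriv_mul (hf x hx).differentiableAt (hg x hx).differentiableAt

lemma d2 (ho : IsOpen s) (hx : x ∈ s) (hf : AnalyticOnNhd ℝ f s) (hg : AnalyticOnNhd ℝ g s) :
    iteratedDeriv 2 (fun y => f y * g y) x
      = iteratedDeriv 2 f x * g x + 2 * (deriv f x * deriv g x) + f x * iteratedDeriv 2 g x := by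
  have hf' := hf.deriv_of_isOpen ho
  have hg' := hg.deriv_of_isOpen ho
  have hev : deriv (fun y => f y * g y) =ᶠ[𝓝 x] fun y => deriv f y * g y + f y * deriv g y := by
    filter_upwards [ho.mem_nhds hx] with y hy using d1 hf hg hy
  simp only [show (2 : ℕ) = 1 + 1 from rfl, iteratedDeriv_succ, iteratedDeriv_one,
    iteratedDeriv_zero]
  rw [hev.deriv_eq,
    deriv_fun_add (f := fun y => deriv f y * g y) (g := fun y => f y * deriv g y) ((hf' x hx).differentiableAt.mul (hg x hx).differentiableAt)
      ((hf x hx).differentiableAt.mul (hg' x hx).differentiableAt),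
    deriv_fun_mul (hf' x hx).differentiableAt (hg x hx).differentiableAt,
    deriv_fun_mul (hf x hx).differentiableAt (hg' x hx).differentiableAt]
  ring

lemma d3 (ho : IsOpen s) (hx : x ∈ s) (hf : AnalyticOnNhd ℝ f s) (hg : AnalyticOnNhd ℝ g s) :
    iteratedDeriv 3 (fun y => f y * g y) x
      = iteratedDeriv 3 f x * g x + 3 * (iteratedDeriv 2 f x * deriv g x)
        + 3 * (deriv f x * iteratedDeriv 2 g x) + f x * iteratedDeriv 3 g x := by
  have hf' := hf.deriv_of_isOpen ho
  have hg' := hg.deriv_of_isOpen ho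
  have hf'' := hf'.deriv_of_isOpen ho
  have hg'' := hg'.deriv_of_isOpen ho
  have hev : deriv (deriv (fun y => f y * g y)) =ᶠ[𝓝 x]
      fun y => deriv (deriv f) y * g y + 2 * (deriv f y * deriv g y) + f y * deriv (deriv g) y := by
    filter_upwards [ho.mem_nhds hx] with y hy
    simpa only [show (2 : ℕ) = 1 + 1 from rfl, iteratedDeriv_succ, iteratedDeriv_one,
      iteratedDeriv_zero] using d2 ho hy hf hg
  have A1 : DifferentiableAt ℝ (fun y => deriv (deriv f) y * g y) x :=
    (hf'' x hx).differentiableAt.mul (hg x hx).differentiableAt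
  have A2 : DifferentiableAt ℝ (fun y => deriv f y * deriv g y) x :=
    (hf' x hx).differentiableAt.mul (hg' x hx).differentiableAt
  have A3 : DifferentiableAt ℝ (fun y => f y * deriv (deriv g) y) x :=
    (hf x hx).differentiableAt.mul (hg'' x hx).differentiableAt
  simp only [show (3 : ℕ) = 1 + 1 + 1 from rfl, show (2 : ℕ) = 1 + 1 from rfl,
    iteratedDeriv_succ, iteratedDeriv_one, iteratedDeriv_zero]
  rw [hev.deriv_eq, deriv_fun_add (f := fun y => deriv (deriv f) y * g y + 2 * (deriv f y * deriv g y))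
      (g := fun y => f y * deriv (deriv g) y) (A1.add (A2.const_mul 2)) A3,
    deriv_fun_add (f := fun y => deriv (deriv f) y * g y) (g := fun y => 2 * (deriv f y * deriv g y))
      A1 (A2.const_mul 2),
    deriv_const_mul 2 A2,
    deriv_fun_mul (hf'' x hx).differentiableAt (hg x hx).differentiableAt,
    deriv_fun_mul (hf' x hx).differentiableAt (hg' x hx).differentiableAt,
    deriv_fun_mul (hf x hx).differentiableAt (hg'' x hx).differentiableAt]
  ring

end helpers

section mlem
variable {s : Set ℝ} {h : ℝ → ℝ} (ho : IsOpen s) (h0 : (0:ℝ) ∈ s) (hh : AnalyticOnNhd ℝ h s)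

lemma powv (m k : ℕ) :
    iteratedDeriv k (fun x : ℝ => x ^ m) 0 = (∏ i ∈ Finset.range k, ((m : ℝ) - i)) * 0 ^ (m - k) := by
  rw [iteratedDeriv_eq_iterate, iter_deriv_pow]

lemma hpow (m : ℕ) : AnalyticOnNhd ℝ (fun x : ℝ => x ^ m) s := analyticOnNhd_id.pow m

include ho h0 hh

lemma M41 : iteratedDeriv 1 (fun r => r ^ 4 * h r) 0 = 0 := by
  rw [iteratedDeriv_one, d1 (hpow 4) hh h0, deriv_pow_field]; norm_num

lemma M42 : iteratedDeriv 2 (fun r => r ^ 4 * h r) 0 = 0 := by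
  rw [d2 ho h0 (hpow 4) hh, powv, deriv_pow_field]
  norm_num [Finset.prod_range_succ]

lemma M43 : iteratedDeriv 3 (fun r => r ^ 4 * h r) 0 = 0 := by
  rw [d3 ho h0 (hpow 4) hh, powv, powv, deriv_pow_field]
  norm_num [Finset.prod_range_succ]

lemma M31 : iteratedDeriv 1 (fun r => r ^ 3 * h r) 0 = 0 := by
  rw [iteratedDeriv_one, d1 (hpow 3) hh h0, deriv_pow_field]; norm_num

lemma M32 : iteratedDeriv 2 (fun r => r ^ 3 * h r) 0 = 0 := by
  rw [d2 ho h0 (hpow 3) hh, powv, deriv_pow_field]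
  norm_num [Finset.prod_range_succ]

lemma M33 : iteratedDeriv 3 (fun r => r ^ 3 * h r) 0 = 6 * h 0 := by
  rw [d3 ho h0 (hpow 3) hh, powv, powv, deriv_pow_field]
  norm_num [Finset.prod_range_succ]

lemma M21 : iteratedDeriv 1 (fun r => r ^ 2 * h r) 0 = 0 := by
  rw [iteratedDeriv_one, d1 (hpow 2) hh h0, deriv_pow_field]; norm_num

lemma M22 : iteratedDeriv 2 (fun r => r ^ 2 * h r) 0 = 2 * h 0 := by
  rw [d2 ho h0 (hpow 2) hh, powv, deriv_pow_field]
  norm_num [Finset.prod_range_succ]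

lemma M23 : iteratedDeriv 3 (fun r => r ^ 2 * h r) 0 = 6 * deriv h 0 := by
  rw [d3 ho h0 (hpow 2) hh, powv, powv, deriv_pow_field]
  norm_num [Finset.prod_range_succ]
  ring

lemma M11 : iteratedDeriv 1 (fun r => r ^ 1 * h r) 0 = h 0 := by
  rw [iteratedDeriv_one, d1 (hpow 1) hh h0, deriv_pow_field]; norm_num

lemma M12 : iteratedDeriv 2 (fun r => r ^ 1 * h r) 0 = 2 * deriv h 0 := by
  rw [d2 ho h0 (hpow 1) hh, powv, deriv_pow_field]
  norm_num [Finset.prod_range_succ]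

lemma M13 : iteratedDeriv 3 (fun r => r ^ 1 * h r) 0 = 3 * iteratedDeriv 2 h 0 := by
  rw [d3 ho h0 (hpow 1) hh, powv, powv, deriv_pow_field]
  norm_num [Finset.prod_range_succ]

end mlem

lemma itd_add10 {s : Set ℝ} (ho : IsOpen s) (h0 : (0:ℝ) ∈ s)
    (t1 t2 t3 t4 t5 t6 t7 t8 t9 t10 : ℝ → ℝ)
    (a1 : AnalyticOnNhd ℝ t1 s) (a2 : AnalyticOnNhd ℝ t2 s) (a3 : AnalyticOnNhd ℝ t3 s)
    (a4 : AnalyticOnNhd ℝ t4 s) (a5 : AnalyticOnNhd ℝ t5 s) (a6 : AnalyticOnNhd ℝ t6 s)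
    (a7 : AnalyticOnNhd ℝ t7 s) (a8 : AnalyticOnNhd ℝ t8 s) (a9 : AnalyticOnNhd ℝ t9 s)
    (a10 : AnalyticOnNhd ℝ t10 s) (n : ℕ) :
    iteratedDeriv n (fun r => t1 r + (t2 r + (t3 r + (t4 r + (t5 r + (t6 r + (t7 r +
        (t8 r + (t9 r + t10 r))))))))) 0
      = iteratedDeriv n t1 0 + (iteratedDeriv n t2 0 + (iteratedDeriv n t3 0 +
        (iteratedDeriv n t4 0 + (iteratedDeriv n t5 0 + (iteratedDeriv n t6 0 +
        (iteratedDeriv n t7 0 + (iteratedDeriv n t8 0 + (iteratedDeriv n t9 0 +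
        iteratedDeriv n t10 0)))))))) := by
  have b9 : AnalyticOnNhd ℝ (fun r => t9 r + t10 r) s := a9.add a10
  have b8 : AnalyticOnNhd ℝ (fun r => t8 r + (t9 r + t10 r)) s := a8.add b9
  have b7 : AnalyticOnNhd ℝ (fun r => t7 r + (t8 r + (t9 r + t10 r))) s := a7.add b8
  have b6 : AnalyticOnNhd ℝ (fun r => t6 r + (t7 r + (t8 r + (t9 r + t10 r)))) s := a6.add b7
  have b5 : AnalyticOnNhd ℝ (fun r => t5 r + (t6 r + (t7 r + (t8 r + (t9 r + t10 r))))) s :=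
    a5.add b6
  have b4 : AnalyticOnNhd ℝ
      (fun r => t4 r + (t5 r + (t6 r + (t7 r + (t8 r + (t9 r + t10 r)))))) s := a4.add b5
  have b3 : AnalyticOnNhd ℝ
      (fun r => t3 r + (t4 r + (t5 r + (t6 r + (t7 r + (t8 r + (t9 r + t10 r))))))) s := a3.add b4
  have b2 : AnalyticOnNhd ℝ
      (fun r => t2 r + (t3 r + (t4 r + (t5 r + (t6 r + (t7 r + (t8 r + (t9 r + t10 r)))))))) s :=
    a2.add b3
  rw [itd_add ho h0 a1 b2 n, itd_add ho h0 a2 b3 n, itd_add ho h0 a3 b4 n,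
    itd_add ho h0 a4 b5 n, itd_add ho h0 a5 b6 n, itd_add ho h0 a6 b7 n,
    itd_add ho h0 a7 b8 n, itd_add ho h0 a8 b9 n, itd_add ho h0 a9 a10 n]


/-- The fifth-order supersymmetry ODE (4.14) as an expression in `V` and `r`. -/
noncomputable def ODE5 (V : ℝ → ℝ) (r : ℝ) : ℝ :=
  3 * r ^ 4 * V r * iteratedDeriv 5 V r + 6 * r ^ 4 * deriv V r * iteratedDeriv 4 V r
    + 30 * r ^ 3 * V r * iteratedDeriv 4 V r + 44 * r ^ 3 * deriv V r * iteratedDeriv 3 V r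
    + r ^ 2 * (47 * V r - 32) * iteratedDeriv 3 V r + 8 * r ^ 3 * (iteratedDeriv 2 V r) ^ 2
    - 3 * r * (13 * V r + 32) * iteratedDeriv 2 V r + 26 * r ^ 2 * deriv V r * iteratedDeriv 2 V r
    - 34 * r * (deriv V r) ^ 2 + 3 * deriv V r * (13 * V r + 32)

/-- Low-order coefficient analysis: a real-analytic solution `V` of the fifth-order
supersymmetry ODE near `0` has Taylor coefficients satisfying `V₁ = 0`,
`V₃(V₀ − 32/11) = 0` and `V₄(V₀ − 1) = 0`, where `Vₙ = V⁽ⁿ⁾(0)`. -/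
theorem stmt_6 (V : ℝ → ℝ) (hV : AnalyticAt ℝ V 0)
    (hode : ∀ᶠ r in nhds (0 : ℝ), ODE5 V r = 0) :
    deriv V 0 = 0 ∧
    iteratedDeriv 3 V 0 * (V 0 - 32 / 11) = 0 ∧
    iteratedDeriv 4 V 0 * (V 0 - 1) = 0 := by
  obtain ⟨u, hu, hAu⟩ := hV.exists_mem_nhds_analyticOnNhd
  set s : Set ℝ := interior u with hsdef
  have ho : IsOpen s := isOpen_interior
  have h0 : (0 : ℝ) ∈ s := mem_interior_iff_mem_nhds.mpr hu
  have hA : AnalyticOnNhd ℝ V s := hAu.mono interior_subset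
  have hD : ∀ n, AnalyticOnNhd ℝ (iteratedDeriv n V) s := by
    intro n
    induction n with
    | zero => simpa [iteratedDeriv_zero] using hA
    | succ n ih => rw [iteratedDeriv_succ]; exact ih.deriv_of_isOpen ho
  -- conversion lemmas
  have hcd1 : deriv V 0 = iteratedDeriv 1 V 0 := by rw [iteratedDeriv_one]
  have hsucc : ∀ k, deriv (iteratedDeriv k V) 0 = iteratedDeriv (k + 1) V 0 := fun k => by
    rw [iteratedDeriv_succ]
  have hcompf : ∀ m k, iteratedDeriv m (iteratedDeriv k V) = iteratedDeriv (m + k) V := by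
    intro m k
    induction m with
    | zero => simp
    | succ m ih => rw [iteratedDeriv_succ, ih, ← iteratedDeriv_succ, Nat.succ_add]
  have hco : ∀ m k, iteratedDeriv m (iteratedDeriv k V) 0 = iteratedDeriv (m + k) V 0 :=
    fun m k => by rw [hcompf m k]
  -- analyticity of building blocks
  have hg13 : AnalyticOnNhd ℝ (fun y => 13 * V y + 32) s := by
    exact (analyticOnNhd_const.mul hA).add analyticOnNhd_const
  have hg47 : AnalyticOnNhd ℝ (fun y => 47 * V y + -32) s := by
    exact (analyticOnNhd_const.mul hA).add analyticOnNhd_const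
  have a1h : AnalyticOnNhd ℝ (fun r => V r * iteratedDeriv 5 V r) s := hA.mul (hD 5)
  have a2h : AnalyticOnNhd ℝ (fun r => iteratedDeriv 1 V r * iteratedDeriv 4 V r) s :=
    (hD 1).mul (hD 4)
  have a3h : AnalyticOnNhd ℝ (fun r => V r * iteratedDeriv 4 V r) s := hA.mul (hD 4)
  have a4h : AnalyticOnNhd ℝ (fun r => iteratedDeriv 1 V r * iteratedDeriv 3 V r) s :=
    (hD 1).mul (hD 3)
  have a5h : AnalyticOnNhd ℝ (fun r => (47 * V r + -32) * iteratedDeriv 3 V r) s :=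
    hg47.mul (hD 3)
  have a6h : AnalyticOnNhd ℝ (fun r => iteratedDeriv 2 V r * iteratedDeriv 2 V r) s :=
    (hD 2).mul (hD 2)
  have a7h : AnalyticOnNhd ℝ (fun r => (13 * V r + 32) * iteratedDeriv 2 V r) s :=
    hg13.mul (hD 2)
  have a8h : AnalyticOnNhd ℝ (fun r => iteratedDeriv 1 V r * iteratedDeriv 2 V r) s :=
    (hD 1).mul (hD 2)
  have a9h : AnalyticOnNhd ℝ (fun r => iteratedDeriv 1 V r * iteratedDeriv 1 V r) s :=
    (hD 1).mul (hD 1)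
  have a10h : AnalyticOnNhd ℝ (fun r => iteratedDeriv 1 V r * (13 * V r + 32)) s :=
    (hD 1).mul hg13
  have i1 : AnalyticOnNhd ℝ (fun r => r ^ 4 * (V r * iteratedDeriv 5 V r)) s := by
    exact (hpow 4).mul a1h
  have i2 : AnalyticOnNhd ℝ (fun r => r ^ 4 * (iteratedDeriv 1 V r * iteratedDeriv 4 V r)) s := by
    exact (hpow 4).mul a2h
  have i3 : AnalyticOnNhd ℝ (fun r => r ^ 3 * (V r * iteratedDeriv 4 V r)) s := by
    exact (hpow 3).mul a3h
  have i4 : AnalyticOnNhd ℝ (fun r => r ^ 3 * (iteratedDeriv 1 V r * iteratedDeriv 3 V r)) s := by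
    exact (hpow 3).mul a4h
  have i5 : AnalyticOnNhd ℝ (fun r => r ^ 2 * ((47 * V r + -32) * iteratedDeriv 3 V r)) s := by
    exact (hpow 2).mul a5h
  have i6 : AnalyticOnNhd ℝ (fun r => r ^ 3 * (iteratedDeriv 2 V r * iteratedDeriv 2 V r)) s := by
    exact (hpow 3).mul a6h
  have i7 : AnalyticOnNhd ℝ (fun r => r ^ 1 * ((13 * V r + 32) * iteratedDeriv 2 V r)) s := by
    exact (hpow 1).mul a7h
  have i8 : AnalyticOnNhd ℝ (fun r => r ^ 2 * (iteratedDeriv 1 V r * iteratedDeriv 2 V r)) s := by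
    exact (hpow 2).mul a8h
  have i9 : AnalyticOnNhd ℝ (fun r => r ^ 1 * (iteratedDeriv 1 V r * iteratedDeriv 1 V r)) s := by
    exact (hpow 1).mul a9h
  have a_t1 : AnalyticOnNhd ℝ (fun r => 3 * (r ^ 4 * (V r * iteratedDeriv 5 V r))) s := by
    exact analyticOnNhd_const.mul i1
  have a_t2 : AnalyticOnNhd ℝ
      (fun r => 6 * (r ^ 4 * (iteratedDeriv 1 V r * iteratedDeriv 4 V r))) s := by
    exact analyticOnNhd_const.mul i2
  have a_t3 : AnalyticOnNhd ℝ (fun r => 30 * (r ^ 3 * (V r * iteratedDeriv 4 V r))) s := by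
    exact analyticOnNhd_const.mul i3
  have a_t4 : AnalyticOnNhd ℝ
      (fun r => 44 * (r ^ 3 * (iteratedDeriv 1 V r * iteratedDeriv 3 V r))) s := by
    exact analyticOnNhd_const.mul i4
  have a_t5 : AnalyticOnNhd ℝ
      (fun r => 1 * (r ^ 2 * ((47 * V r + -32) * iteratedDeriv 3 V r))) s := by
    exact analyticOnNhd_const.mul i5
  have a_t6 : AnalyticOnNhd ℝ
      (fun r => 8 * (r ^ 3 * (iteratedDeriv 2 V r * iteratedDeriv 2 V r))) s := by
    exact analyticOnNhd_const.mul i6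
  have a_t7 : AnalyticOnNhd ℝ
      (fun r => -3 * (r ^ 1 * ((13 * V r + 32) * iteratedDeriv 2 V r))) s := by
    exact analyticOnNhd_const.mul i7
  have a_t8 : AnalyticOnNhd ℝ
      (fun r => 26 * (r ^ 2 * (iteratedDeriv 1 V r * iteratedDeriv 2 V r))) s := by
    exact analyticOnNhd_const.mul i8
  have a_t9 : AnalyticOnNhd ℝ
      (fun r => -34 * (r ^ 1 * (iteratedDeriv 1 V r * iteratedDeriv 1 V r))) s := by
    exact analyticOnNhd_const.mul i9
  have a_t10 : AnalyticOnNhd ℝ (fun r => 3 * (iteratedDeriv 1 V r * (13 * V r + 32))) s := by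
    exact analyticOnNhd_const.mul a10h
  -- splitting of the ODE into terms
  have hsplit : ODE5 V = fun r =>
      3 * (r ^ 4 * (V r * iteratedDeriv 5 V r)) +
      (6 * (r ^ 4 * (iteratedDeriv 1 V r * iteratedDeriv 4 V r)) +
      (30 * (r ^ 3 * (V r * iteratedDeriv 4 V r)) +
      (44 * (r ^ 3 * (iteratedDeriv 1 V r * iteratedDeriv 3 V r)) +
      (1 * (r ^ 2 * ((47 * V r + -32) * iteratedDeriv 3 V r)) +
      (8 * (r ^ 3 * (iteratedDeriv 2 V r * iteratedDeriv 2 V r)) +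
      (-3 * (r ^ 1 * ((13 * V r + 32) * iteratedDeriv 2 V r)) +
      (26 * (r ^ 2 * (iteratedDeriv 1 V r * iteratedDeriv 2 V r)) +
      (-34 * (r ^ 1 * (iteratedDeriv 1 V r * iteratedDeriv 1 V r)) +
      3 * (iteratedDeriv 1 V r * (13 * V r + 32)))))))))) := by
    funext r
    simp only [ODE5, ← iteratedDeriv_one]
    ring
  -- all derivatives of the ODE vanish at 0
  have hzero : ∀ m, iteratedDeriv m (fun _ : ℝ => (0 : ℝ)) = fun _ => 0 := by
    intro m
    induction m with
    | zero => simp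
    | succ m ih => rw [iteratedDeriv_succ, ih]; funext x; simp
  have hE : ∀ n, iteratedDeriv n (ODE5 V) 0 = 0 := by
    intro n
    have hev : ODE5 V =ᶠ[nhds (0 : ℝ)] fun _ => 0 := hode
    rw [Filter.EventuallyEq.iteratedDeriv_eq n hev, hzero n]
  -- affine values
  have haff13 : ∀ n, 0 < n →
      iteratedDeriv n (fun y => 13 * V y + 32) 0 = 13 * iteratedDeriv n V 0 :=
    fun n hn => itd_affine ho h0 hA 13 32 hn
  have haff47 : ∀ n, 0 < n →
      iteratedDeriv n (fun y => 47 * V y + -32) 0 = 47 * iteratedDeriv n V 0 :=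
    fun n hn => itd_affine ho h0 hA 47 (-32) hn
  have hda13 : deriv (fun y => 13 * V y + 32) 0 = 13 * deriv V 0 := aff_deriv hA h0 13 32
  have hda47 : deriv (fun y => 47 * V y + -32) 0 = 47 * deriv V 0 := aff_deriv hA h0 47 (-32)
  -- first derivative relation
  have K1 : iteratedDeriv 1 (ODE5 V) 0 = 5 * iteratedDeriv 1 V 0 ^ 2 := by
    rw [hsplit, itd_add10 ho h0 _ _ _ _ _ _ _ _ _ _ a_t1 a_t2 a_t3 a_t4 a_t5 a_t6 a_t7 a_t8
      a_t9 a_t10 1,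
      itd_cmul ho h0 i1 3 1, itd_cmul ho h0 i2 6 1, itd_cmul ho h0 i3 30 1,
      itd_cmul ho h0 i4 44 1, itd_cmul ho h0 i5 1 1, itd_cmul ho h0 i6 8 1,
      itd_cmul ho h0 i7 (-3) 1, itd_cmul ho h0 i8 26 1, itd_cmul ho h0 i9 (-34) 1,
      itd_cmul ho h0 a10h 3 1,
      M41 ho h0 a1h, M41 ho h0 a2h, M31 ho h0 a3h, M31 ho h0 a4h, M21 ho h0 a5h,
      M31 ho h0 a6h, M11 ho h0 a7h, M21 ho h0 a8h, M11 ho h0 a9h,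
      iteratedDeriv_one (f := fun r => iteratedDeriv 1 V r * (13 * V r + 32)),
      d1 (hD 1) hg13 h0, hda13]
    simp only [hsucc, hcd1]
    norm_num
    ring
  -- second derivative relation
  have K2 : iteratedDeriv 2 (ODE5 V) 0 = 55 * V 0 * iteratedDeriv 3 V 0
      - 160 * iteratedDeriv 3 V 0 - 45 * iteratedDeriv 1 V 0 * iteratedDeriv 2 V 0 := by
    rw [hsplit, itd_add10 ho h0 _ _ _ _ _ _ _ _ _ _ a_t1 a_t2 a_t3 a_t4 a_t5 a_t6 a_t7 a_t8
      a_t9 a_t10 2,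
      itd_cmul ho h0 i1 3 2, itd_cmul ho h0 i2 6 2, itd_cmul ho h0 i3 30 2,
      itd_cmul ho h0 i4 44 2, itd_cmul ho h0 i5 1 2, itd_cmul ho h0 i6 8 2,
      itd_cmul ho h0 i7 (-3) 2, itd_cmul ho h0 i8 26 2, itd_cmul ho h0 i9 (-34) 2,
      itd_cmul ho h0 a10h 3 2,
      M42 ho h0 a1h, M42 ho h0 a2h, M32 ho h0 a3h, M32 ho h0 a4h, M22 ho h0 a5h,
      M32 ho h0 a6h, M12 ho h0 a7h, M22 ho h0 a8h, M12 ho h0 a9h,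
      d2 ho h0 (hD 1) hg13,
      d1 hg13 (hD 2) h0, d1 (hD 1) (hD 1) h0, hda13, haff13 2 (by norm_num)]
    simp only [hsucc, hcd1, hco]
    norm_num
    ring
  -- third derivative relation
  have K3 : iteratedDeriv 3 (ODE5 V) 0 = 384 * V 0 * iteratedDeriv 4 V 0
      - 384 * iteratedDeriv 4 V 0 + 420 * iteratedDeriv 1 V 0 * iteratedDeriv 3 V 0 := by
    rw [hsplit, itd_add10 ho h0 _ _ _ _ _ _ _ _ _ _ a_t1 a_t2 a_t3 a_t4 a_t5 a_t6 a_t7 a_t8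
      a_t9 a_t10 3,
      itd_cmul ho h0 i1 3 3, itd_cmul ho h0 i2 6 3, itd_cmul ho h0 i3 30 3,
      itd_cmul ho h0 i4 44 3, itd_cmul ho h0 i5 1 3, itd_cmul ho h0 i6 8 3,
      itd_cmul ho h0 i7 (-3) 3, itd_cmul ho h0 i8 26 3, itd_cmul ho h0 i9 (-34) 3,
      itd_cmul ho h0 a10h 3 3,
      M43 ho h0 a1h, M43 ho h0 a2h, M33 ho h0 a3h, M33 ho h0 a4h, M23 ho h0 a5h,
      M33 ho h0 a6h, M13 ho h0 a7h, M23 ho h0 a8h, M13 ho h0 a9h,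
      d3 ho h0 (hD 1) hg13,
      d1 hg47 (hD 3) h0, d1 (hD 1) (hD 2) h0,
      d2 ho h0 hg13 (hD 2), d2 ho h0 (hD 1) (hD 1),
      hda13, hda47, haff13 2 (by norm_num), haff13 3 (by norm_num)]
    simp only [hsucc, hcd1, hco]
    norm_num
    ring
  -- conclude
  have E1 := K1 ▸ hE 1
  have E2 := K2 ▸ hE 2
  have E3 := K3 ▸ hE 3
  have hv1 : iteratedDeriv 1 V 0 = 0 := by nlinarith [sq_nonneg (iteratedDeriv 1 V 0)]
  refine ⟨by rw [hcd1]; exact hv1, ?_, ?_⟩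
  · linear_combination (1 / 55) * E2 + (9 / 11) * iteratedDeriv 2 V 0 * hv1
  · linear_combination (1 / 384) * E3 - (35 / 32) * iteratedDeriv 3 V 0 * hv1
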